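/- For every customer type c_i ∈ 𝒞 and every finite list (c^1,…,c^L) of customer types (L ≥ 0), the following identity holds: ∏_{ℓ=1}^{L} 1/μ_{S({c^1,…,c^ℓ})} = Σ_{ℓ=0}^{L} ( ∏_{j=1}^{ℓ} 1/μ_{S({c^1,…,c^j})} ) · ( 1/μ_{S({c_i,c^1,…,c^ℓ})} ) · ( ∏_{j=ℓ+1}^{L} 1/μ_{S({c_i,c^1,…,c^j})} ) · μ_{S(c_i) ∖ S({c^1,…,c^ℓ})}. -/

import Mathlib

open Finset

/-- Sum of service rates over a finite set of server types. -/
def muS {S : Type*} (mu : S → ℝ) (B : Finset S) : ℝ := ∑ s ∈ B, mu s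

/-- The set of server types compatible with customer type `c`. -/
def Sc {C S : Type*} [Fintype S] (R : C → S → Prop) [∀ c s, Decidable (R c s)]
    (c : C) : Finset S := Finset.univ.filter fun s => R c s

/-- The set of server types compatible with at least one customer type in the list `w`. -/
def SsetL {C S : Type*} [Fintype S] (R : C → S → Prop) [∀ c s, Decidable (R c s)]
    (w : List C) : Finset S := Finset.univ.filter fun s => ∃ c ∈ w, R c s

lemma SsetL_cons {C S : Type*} [Fintype S] (R : C → S → Prop) [∀ c s, Decidable (R c s)]
    (c : C) (w : List C) [DecidableEq S] : SsetL R (c :: w) = Sc R c ∪ SsetL R w := by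
  ext s; simp [SsetL, Sc, or_comm]

lemma muS_pos {S : Type*} (mu : S → ℝ) (hmu : ∀ s, 0 < mu s) {B : Finset S}
    (h : B.Nonempty) : 0 < muS mu B :=
  Finset.sum_pos (fun s _ => hmu s) h

lemma muS_sdiff {C S : Type*} [Fintype S] [DecidableEq S] (R : C → S → Prop)
    [∀ c s, Decidable (R c s)] (mu : S → ℝ) (c : C) (w : List C) :
    muS mu (Sc R c \ SsetL R w) = muS mu (SsetL R (c :: w)) - muS mu (SsetL R w) := by
  rw [SsetL_cons]
  have h : Sc R c ∪ SsetL R w = SsetL R w ∪ (Sc R c \ SsetL R w) := by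
    rw [Finset.union_sdiff_self_eq_union, Finset.union_comm]
  rw [h]
  unfold muS
  rw [Finset.sum_union Finset.disjoint_sdiff]
  ring


/-- the product identity used in the partial-balance proof (balance of
customer arrivals with service completions), for a fixed customer type `ci` and a
finite list `w = (c^1, …, c^L)` of customer types. -/
theorem stmt0 {C S : Type*} [Fintype C] [Fintype S] [Nonempty C] [Nonempty S]
    [DecidableEq S]
    (R : C → S → Prop) [∀ c s, Decidable (R c s)]
    (mu : S → ℝ) (hmu : ∀ s, 0 < mu s)
    (hScne : ∀ c : C, (Sc R c).Nonempty)
    (ci : C) (w : List C) :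
    (∏ l ∈ Finset.range w.length, (1 : ℝ) / muS mu (SsetL R (w.take (l + 1)))) =
      ∑ l ∈ Finset.range (w.length + 1),
        (∏ j ∈ Finset.range l, (1 : ℝ) / muS mu (SsetL R (w.take (j + 1)))) *
          (1 / muS mu (SsetL R (ci :: w.take l))) *
          (∏ j ∈ Finset.Ico l w.length, (1 : ℝ) / muS mu (SsetL R (ci :: w.take (j + 1)))) *
          muS mu (Sc R ci \ SsetL R (w.take l)) := by
  set L := w.length with hL
  set M : ℕ → ℝ := fun l => muS mu (SsetL R (w.take l)) with hM
  set M' : ℕ → ℝ := fun l => muS mu (SsetL R (ci :: w.take l)) with hM'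
  -- basic facts
  have hM0 : M 0 = 0 := by
    simp [hM, SsetL, muS]
  have hM'pos : ∀ l, 0 < M' l := by
    intro l
    apply muS_pos mu hmu
    obtain ⟨s, hs⟩ := hScne ci
    refine ⟨s, ?_⟩
    simp only [Sc, Finset.mem_filter] at hs
    simp [SsetL]
    exact Or.inl hs.2
  have hMpos : ∀ l, l < L → 0 < M (l + 1) := by
    intro l hl
    apply muS_pos mu hmu
    have hlen : 0 < (w.take (l + 1)).length := by
      simp [List.length_take]; omega
    obtain ⟨c, hc⟩ := List.exists_mem_of_length_pos hlen
    obtain ⟨s, hs⟩ := hScne c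
    simp only [Sc, Finset.mem_filter] at hs
    exact ⟨s, by simp [SsetL]; exact ⟨c, hc, hs.2⟩⟩
  have hdiff : ∀ l, muS mu (Sc R ci \ SsetL R (w.take l)) = M' l - M l := by
    intro l; exact muS_sdiff R mu ci (w.take l)
  -- telescoping function
  set G : ℕ → ℝ := fun l => match l with
    | 0 => 0
    | Nat.succ k => (∏ j ∈ Finset.range k, (1 : ℝ) / M (j + 1)) *
        ∏ j ∈ Finset.Ico k L, (1 : ℝ) / M' (j + 1) with hG
  have key : ∀ l ∈ Finset.range (L + 1),
      (∏ j ∈ Finset.range l, (1 : ℝ) / M (j + 1)) *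
        (1 / M' l) *
        (∏ j ∈ Finset.Ico l L, (1 : ℝ) / M' (j + 1)) *
        (muS mu (Sc R ci \ SsetL R (w.take l))) = G (l + 1) - G l := by
    intro l hl
    rw [hdiff l]
    rcases l with _ | k
    · -- l = 0
      simp only [hG, hM0, sub_zero, Finset.range_zero, Finset.prod_empty, one_mul]
      have h0 := (hM'pos 0).ne'
      have hP : (∏ x ∈ Finset.range L, M' (x + 1)) ≠ 0 :=
        Finset.prod_ne_zero_iff.mpr fun x _ => (hM'pos _).ne'
      field_simp
    · -- l = k+1
      simp only [Finset.mem_range] at hl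
      have hk : k < L := by omega
      have h1 : (∏ j ∈ Finset.range (k + 1), (1 : ℝ) / M (j + 1)) =
          (∏ j ∈ Finset.range k, (1 : ℝ) / M (j + 1)) * (1 / M (k + 1)) :=
        Finset.prod_range_succ _ _
      have h2 : (∏ j ∈ Finset.Ico k L, (1 : ℝ) / M' (j + 1)) =
          (1 / M' (k + 1)) * ∏ j ∈ Finset.Ico (k + 1) L, (1 : ℝ) / M' (j + 1) :=
        Finset.prod_eq_prod_Ico_succ_bot hk _
      simp only [hG, h1, h2]
      have hMne := (hMpos k hk).ne'
      have hM'ne := (hM'pos (k + 1)).ne'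
      have hP1 : (∏ x ∈ Finset.Ico (k + 1) L, M' (x + 1)) ≠ 0 :=
        Finset.prod_ne_zero_iff.mpr fun x _ => (hM'pos _).ne'
      have hP2 : (∏ x ∈ Finset.range k, M (x + 1)) ≠ 0 :=
        Finset.prod_ne_zero_iff.mpr fun x hx => by
          simp only [Finset.mem_range] at hx
          exact (hMpos x (by omega)).ne'
      field_simp
  rw [Finset.sum_congr rfl key, Finset.sum_range_sub G]
  simp [hG]
  rfl
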